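/- Let θ > 1 be real. The function n ↦ M_θ(n) is eventually strictly increasing (i.e., there exists an integer n₀ > log θ / log 2 such that M_θ(n) < M_θ(n+1) for all n ≥ n₀) if and only if θ ≤ e. -/

import Mathlib

open Real

/-- `M θ n = ⌊1 / {θ^(1/n)}⌋`, the integer part of the reciprocal of the
fractional part of the `n`-th root of `θ`. -/
noncomputable def M (θ : ℝ) (n : ℕ) : ℤ := ⌊1 / Int.fract (θ ^ ((n : ℝ)⁻¹))⌋

/-- `g x = 1 / log (1 + 1/x)`. -/
noncomputable def g (x : ℝ) : ℝ := 1 / Real.log (1 + 1 / x)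

private lemma log_le_aux (u : ℝ) (hu : 1 ≤ u) : Real.log u ≤ (u - u⁻¹) / 2 := by
  have hmono : MonotoneOn (fun v : ℝ => (v - v⁻¹) / 2 - Real.log v) (Set.Ici 1) := by
    apply monotoneOn_of_deriv_nonneg (convex_Ici 1)
    · apply ContinuousOn.sub
      · exact (continuousOn_id.sub (continuousOn_id.inv₀ fun x hx =>
          ((lt_of_lt_of_le one_pos hx).ne'))).div_const 2
      · exact Real.continuousOn_log.mono fun x hx => by
          simp only [Set.mem_compl_iff, Set.mem_singleton_iff]
          exact (lt_of_lt_of_le one_pos hx).ne'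
    · intro x hx
      rw [interior_Ici] at hx
      have hx0 : x ≠ 0 := (lt_trans one_pos hx).ne'
      exact (((((hasDerivAt_id x).sub (hasDerivAt_inv hx0)).div_const 2).sub
        (Real.hasDerivAt_log hx0)).differentiableAt).differentiableWithinAt
    · intro x hx
      rw [interior_Ici] at hx
      have hx0 : x ≠ 0 := by
        have : (0:ℝ) < x := lt_trans one_pos hx
        exact this.ne'
      have hd : HasDerivAt (fun v : ℝ => (v - v⁻¹) / 2 - Real.log v)
          ((1 - -(x ^ 2)⁻¹) / 2 - x⁻¹) x :=
        (((hasDerivAt_id x).sub (hasDerivAt_inv hx0)).div_const 2).sub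
          (Real.hasDerivAt_log hx0)
      rw [hd.deriv]
      have h1 : (x ^ 2)⁻¹ = x⁻¹ * x⁻¹ := by rw [sq, mul_inv]
      rw [h1]
      nlinarith [sq_nonneg (1 - x⁻¹)]
  have h := hmono (Set.self_mem_Ici) hu hu
  simp only [inv_one, Real.log_one] at h
  linarith

private lemma log_ge_aux (u : ℝ) (hu : 1 ≤ u) : 2 * (u - 1) / (u + 1) ≤ Real.log u := by
  have hmono : MonotoneOn (fun v : ℝ => Real.log v - (2 - 4 * (v + 1)⁻¹)) (Set.Ici 1) := by
    apply monotoneOn_of_deriv_nonneg (convex_Ici 1)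
    · apply ContinuousOn.sub
      · exact Real.continuousOn_log.mono fun x hx => by
          simp only [Set.mem_compl_iff, Set.mem_singleton_iff]
          exact (lt_of_lt_of_le one_pos hx).ne'
      · apply ContinuousOn.sub continuousOn_const
        exact ContinuousOn.mul continuousOn_const
          ((continuousOn_id.add continuousOn_const).inv₀ fun x hx => by
            have : (1:ℝ) ≤ x := hx
            intro h
            simp only [Pi.add_apply, id_eq] at h
            linarith)
    · intro x hx
      rw [interior_Ici] at hx
      have hx0 : x ≠ 0 := (lt_trans one_pos hx).ne'
      have hx1 : x + 1 ≠ 0 := by intro h; linarith [lt_trans one_pos (Set.mem_Ioi.mp hx)]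
      have hd : HasDerivAt (fun v : ℝ => Real.log v - (2 - 4 * (v + 1)⁻¹))
          (x⁻¹ - (0 - 4 * (-1 / (x + 1) ^ 2))) x :=
        (Real.hasDerivAt_log hx0).sub ((hasDerivAt_const x 2).sub
          ((((hasDerivAt_id x).add_const 1).inv hx1).const_mul 4))
      exact hd.differentiableAt.differentiableWithinAt
    · intro x hx
      rw [interior_Ici] at hx
      have hx0 : x ≠ 0 := (lt_trans one_pos hx).ne'
      have hxpos : (0:ℝ) < x := lt_trans one_pos hx
      have hx1 : x + 1 ≠ 0 := by intro h; linarith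
      have hd : HasDerivAt (fun v : ℝ => Real.log v - (2 - 4 * (v + 1)⁻¹))
          (x⁻¹ - (0 - 4 * (-1 / (x + 1) ^ 2))) x :=
        (Real.hasDerivAt_log hx0).sub ((hasDerivAt_const x 2).sub
          ((((hasDerivAt_id x).add_const 1).inv hx1).const_mul 4))
      rw [hd.deriv]
      have h4 : 4 / (x + 1) ^ 2 ≤ x⁻¹ := by
        rw [inv_eq_one_div, div_le_div_iff₀ (by positivity) hxpos]
        nlinarith [sq_nonneg (x - 1)]
      have : x⁻¹ - (0 - 4 * (-1 / (x + 1) ^ 2)) = x⁻¹ - 4 / (x + 1) ^ 2 := by ring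
      rw [this]
      linarith
  have h := hmono (Set.self_mem_Ici) hu hu
  have hu1 : u + 1 ≠ 0 := by intro h; linarith
  have heq : 2 * (u - 1) / (u + 1) = 2 - 4 * (u + 1)⁻¹ := by field_simp; ring
  simp only [Real.log_one] at h
  rw [heq]
  norm_num at h
  linarith

private lemma K1 (x : ℝ) (hx : 1 ≤ x) :
    Real.log (1 + x⁻¹) ≤ (2 * x + 1) / (2 * x * (x + 1)) := by
  have hx0 : (0:ℝ) < x := lt_of_lt_of_le one_pos hx
  have hu : (1:ℝ) ≤ 1 + x⁻¹ := by
    have : (0:ℝ) ≤ x⁻¹ := by positivity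
    linarith
  have h := log_le_aux (1 + x⁻¹) hu
  have heq : ((1 + x⁻¹) - (1 + x⁻¹)⁻¹) / 2 = (2 * x + 1) / (2 * x * (x + 1)) := by
    have h1 : (1:ℝ) + x⁻¹ = (x + 1) / x := by field_simp
    rw [h1, inv_div]
    field_simp
    ring
  linarith

private lemma K2 (x : ℝ) (hx : 1 ≤ x) :
    2 / (2 * x + 1) ≤ Real.log (1 + x⁻¹) := by
  have hx0 : (0:ℝ) < x := lt_of_lt_of_le one_pos hx
  have hu : (1:ℝ) ≤ 1 + x⁻¹ := by
    have : (0:ℝ) ≤ x⁻¹ := by positivity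
    linarith
  have h := log_ge_aux (1 + x⁻¹) hu
  have heq : 2 * ((1 + x⁻¹) - 1) / ((1 + x⁻¹) + 1) = 2 / (2 * x + 1) := by
    rw [div_eq_div_iff]
    · field_simp
      ring
    · have : (0:ℝ) < x⁻¹ := by positivity
      linarith
    · linarith
  linarith

private lemma fract_root (θ : ℝ) (hθ : 1 < θ) (n : ℕ)
    (hn : Real.log θ / Real.log 2 < n) :
    Int.fract (θ ^ ((n : ℝ)⁻¹)) = Real.exp (Real.log θ / n) - 1 ∧
      0 < Real.exp (Real.log θ / n) - 1 ∧ Real.exp (Real.log θ / n) - 1 < 1 := by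
  have hL0 : 0 < Real.log θ := Real.log_pos hθ
  have hlog2 : 0 < Real.log 2 := Real.log_pos one_lt_two
  have hn0 : (0:ℝ) < n := lt_trans (by positivity) hn
  have hx : θ ^ ((n : ℝ)⁻¹) = Real.exp (Real.log θ / n) := by
    rw [Real.rpow_def_of_pos (by linarith), div_eq_mul_inv]
  have h1 : 1 < Real.exp (Real.log θ / n) := by
    rw [Real.one_lt_exp_iff]
    positivity
  have h2 : Real.exp (Real.log θ / n) < 2 := by
    rw [← Real.exp_log (by norm_num : (0:ℝ) < 2)]
    apply Real.exp_lt_exp.mpr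
    rw [div_lt_iff₀ hn0]
    rw [div_lt_iff₀ hlog2] at hn
    linarith
  refine ⟨?_, by linarith, by linarith⟩
  rw [hx]
  have hfl : ⌊Real.exp (Real.log θ / n)⌋ = 1 := by
    rw [Int.floor_eq_iff]
    constructor
    · push_cast; linarith
    · push_cast; linarith
  rw [Int.fract, hfl]
  push_cast
  ring

private lemma le_M_iff (θ : ℝ) (hθ : 1 < θ) (n : ℕ)
    (hn : Real.log θ / Real.log 2 < n) (m : ℤ) (hm : 0 < m) :
    m ≤ M θ n ↔ Real.log θ ≤ (n : ℝ) * Real.log (1 + (m : ℝ)⁻¹) := by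
  obtain ⟨hfr, hy0, hy1⟩ := fract_root θ hθ n hn
  have hL0 : 0 < Real.log θ := Real.log_pos hθ
  have hlog2 : 0 < Real.log 2 := Real.log_pos one_lt_two
  have hn0 : (0:ℝ) < n := lt_trans (by positivity) hn
  have hm0 : (0:ℝ) < (m : ℝ) := by exact_mod_cast hm
  unfold M
  rw [hfr, one_div, Int.le_floor]
  rw [le_inv_comm₀ hm0 hy0]
  rw [sub_le_iff_le_add']
  rw [← Real.le_log_iff_exp_le (by positivity)]
  rw [div_le_iff₀ hn0]
  rw [mul_comm]

set_option maxHeartbeats 1000000 in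
theorem stmt_13 (θ : ℝ) (hθ : 1 < θ) :
    (∃ n₀ : ℕ, (n₀ : ℝ) > Real.log θ / Real.log 2 ∧
      ∀ n : ℕ, n₀ ≤ n → M θ n < M θ (n + 1)) ↔ θ ≤ Real.exp 1 := by
  have hL0 : 0 < Real.log θ := Real.log_pos hθ
  have hlog2 : 0 < Real.log 2 := Real.log_pos one_lt_two
  constructor
  · rintro ⟨n₀, hgt, hinc⟩
    by_contra hc
    push_neg at hc
    have hL1 : 1 < Real.log θ := by
      have h := Real.log_lt_log (Real.exp_pos 1) hc
      rwa [Real.log_exp] at h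
    have hup : ∀ n : ℕ, Real.log θ / Real.log 2 < n → (M θ n : ℝ) ≤ n / Real.log θ := by
      intro n hn
      obtain ⟨hfr, hy0, hy1⟩ := fract_root θ hθ n hn
      have hn0 : (0:ℝ) < n := lt_trans (by positivity) hn
      have hy : Real.log θ / n ≤ Real.exp (Real.log θ / n) - 1 := by
        have := Real.add_one_le_exp (Real.log θ / n)
        linarith
      have hd0 : (0:ℝ) < Real.log θ / n := by positivity
      unfold M
      rw [hfr]
      calc (⌊1 / (Real.exp (Real.log θ / n) - 1)⌋ : ℝ)
          ≤ 1 / (Real.exp (Real.log θ / n) - 1) := Int.floor_le _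
        _ ≤ 1 / (Real.log θ / n) := one_div_le_one_div_of_le hd0 hy
        _ = n / Real.log θ := one_div_div _ _
    have hstep : ∀ k : ℕ, M θ n₀ + k ≤ M θ (n₀ + k) := by
      intro k
      induction k with
      | zero => simp
      | succ k ih =>
        have h := hinc (n₀ + k) (Nat.le_add_right _ _)
        have h' : M θ (n₀ + k) + 1 ≤ M θ (n₀ + k + 1) := h
        push_cast
        push_cast at ih
        have : n₀ + (k + 1) = n₀ + k + 1 := by ring
        rw [this]
        linarith
    obtain ⟨k, hk⟩ := exists_nat_gt
      (((n₀ : ℝ) - Real.log θ * (M θ n₀ : ℝ)) / (Real.log θ - 1))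
    have hr : Real.log θ / Real.log 2 < ((n₀ + k : ℕ) : ℝ) := by
      push_cast
      have : (0:ℝ) ≤ k := Nat.cast_nonneg _
      linarith
    have h1 := hup (n₀ + k) hr
    have h2 : (M θ n₀ : ℝ) + k ≤ ((M θ (n₀ + k) : ℤ) : ℝ) := by
      exact_mod_cast hstep k
    have h3 : Real.log θ * ((M θ n₀ : ℝ) + k) ≤ (n₀ : ℝ) + k := by
      have h4 : (M θ n₀ : ℝ) + k ≤ ((n₀ + k : ℕ) : ℝ) / Real.log θ := le_trans h2 h1
      rw [le_div_iff₀ hL0] at h4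
      push_cast at h4
      nlinarith
    have hk' : (n₀ : ℝ) - Real.log θ * (M θ n₀ : ℝ) < k * (Real.log θ - 1) := by
      rw [div_lt_iff₀ (by linarith)] at hk
      linarith
    nlinarith
  · intro hle
    have hL1 : Real.log θ ≤ 1 := by
      have h := Real.log_le_log (by linarith) hle
      rwa [Real.log_exp] at h
    rcases eq_or_lt_of_le hL1 with hLeq | hLlt
    · -- θ = e case: log θ = 1
      refine ⟨2, ?_, ?_⟩
      · rw [hLeq, gt_iff_lt, div_lt_iff₀ hlog2]
        push_cast
        nlinarith [Real.log_two_gt_d9]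
      · intro n hn2
        have hn1 : (1:ℝ) ≤ (n : ℝ) := by exact_mod_cast Nat.one_le_of_lt hn2
        have hn2' : (2:ℝ) ≤ (n : ℝ) := by exact_mod_cast hn2
        have h12 : Real.log θ / Real.log 2 < 2 := by
          rw [hLeq, div_lt_iff₀ hlog2]
          nlinarith [Real.log_two_gt_d9]
        have hrn : Real.log θ / Real.log 2 < n := lt_of_lt_of_le h12 hn2'
        have hrn1 : Real.log θ / Real.log 2 < ((n + 1 : ℕ) : ℝ) := by
          push_cast; linarith
        have hnpos : (0:ℤ) < (n : ℤ) := by exact_mod_cast (by omega : 0 < n)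
        have hupper : ¬ ((n : ℤ) ≤ M θ n) := by
          rw [le_M_iff θ hθ n hrn (n : ℤ) hnpos, hLeq]
          push_cast
          intro h
          have hpos : (0:ℝ) < 1 + (n : ℝ)⁻¹ := by positivity
          have hne : 1 + (n : ℝ)⁻¹ ≠ 1 := by
            have : (0:ℝ) < (n : ℝ)⁻¹ := by positivity
            linarith
          have hlt := Real.log_lt_sub_one_of_pos hpos hne
          have hinv : (n : ℝ) * (n : ℝ)⁻¹ = 1 := mul_inv_cancel₀ (by linarith)
          nlinarith
        have hlower : (n : ℤ) ≤ M θ (n + 1) := by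
          rw [le_M_iff θ hθ (n + 1) hrn1 (n : ℤ) hnpos, hLeq]
          push_cast
          have hK2 := K2 (n : ℝ) hn1
          calc (1:ℝ) ≤ ((n : ℝ) + 1) * (2 / (2 * (n : ℝ) + 1)) := by
                rw [mul_div_assoc', le_div_iff₀ (by linarith)]
                linarith
            _ ≤ ((n : ℝ) + 1) * Real.log (1 + (n : ℝ)⁻¹) :=
                mul_le_mul_of_nonneg_left hK2 (by linarith)
        push_neg at hupper
        exact lt_of_lt_of_le hupper hlower
    · -- θ < e case
      obtain ⟨m₁, hm₁⟩ := exists_nat_gt (1 / (1 - Real.log θ))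
      have h1L : 0 < 1 - Real.log θ := by linarith
      have hm₁1 : (1:ℝ) < (m₁ : ℝ) := by
        have : (1:ℝ) < 1 / (1 - Real.log θ) := by
          rw [lt_div_iff₀ h1L]; linarith
        linarith
      have hm₁0 : (0:ℝ) < (m₁ : ℝ) := by linarith
      have hlogm₁ : 0 < Real.log (1 + (m₁ : ℝ)⁻¹) := by
        apply Real.log_pos
        have : (0:ℝ) < (m₁ : ℝ)⁻¹ := by positivity
        linarith
      obtain ⟨n₀, hn₀⟩ := exists_nat_gt
        (max (Real.log θ / Real.log 2) (Real.log θ / Real.log (1 + (m₁ : ℝ)⁻¹)))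
      refine ⟨n₀, lt_of_le_of_lt (le_max_left _ _) hn₀, ?_⟩
      intro n hn
      have hnn₀ : (n₀ : ℝ) ≤ n := by exact_mod_cast hn
      have hrn : Real.log θ / Real.log 2 < n :=
        lt_of_lt_of_le (lt_of_le_of_lt (le_max_left _ _) hn₀) hnn₀
      have hrn1 : Real.log θ / Real.log 2 < ((n + 1 : ℕ) : ℝ) := by
        push_cast; push_cast at hrn; linarith
      have hmle : (m₁ : ℤ) ≤ M θ n := by
        rw [le_M_iff θ hθ n hrn (m₁ : ℤ) (by exact_mod_cast (by linarith : (0:ℝ) < (m₁:ℝ)))]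
        push_cast
        have h5 : Real.log θ / Real.log (1 + (m₁ : ℝ)⁻¹) < n :=
          lt_of_lt_of_le (lt_of_le_of_lt (le_max_right _ _) hn₀) hnn₀
        rw [div_lt_iff₀ hlogm₁] at h5
        linarith
      set m : ℤ := M θ n with hmdef
      have hm0 : 0 < m := by
        have : (1:ℤ) ≤ (m₁ : ℤ) := by exact_mod_cast (by linarith : (1:ℝ) ≤ (m₁:ℝ))
        omega
      set a : ℝ := (m : ℝ) with hadef
      have hm1' : (1:ℤ) ≤ m := hm0
      have ha1 : (1:ℝ) ≤ a := by rw [hadef]; exact_mod_cast hm1'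
      have ham₁ : (m₁ : ℝ) ≤ a := by rw [hadef]; exact_mod_cast hmle
      have ha : 1 < a * (1 - Real.log θ) := by
        rw [div_lt_iff₀ h1L] at hm₁
        nlinarith
      have h1 : Real.log θ ≤ (n : ℝ) * Real.log (1 + a⁻¹) :=
        (le_M_iff θ hθ n hrn m hm0).mp le_rfl
      have hK1 := K1 a ha1
      have hn0 : (0:ℝ) ≤ (n : ℝ) := Nat.cast_nonneg _
      have h3 : Real.log θ * (2 * a * (a + 1)) ≤ (n : ℝ) * (2 * a + 1) := by
        have hpos : (0:ℝ) < 2 * a * (a + 1) := by nlinarith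
        have h6 : Real.log θ ≤ (n : ℝ) * ((2 * a + 1) / (2 * a * (a + 1))) :=
          le_trans h1 (mul_le_mul_of_nonneg_left hK1 hn0)
        rw [mul_div_assoc'] at h6
        exact (le_div_iff₀ hpos).mp h6
      have key : Real.log θ * (4 * a + 3) ≤ 4 * a + 2 := by nlinarith [ha, hLlt, ha1]
      have h4 : Real.log θ * (2 * a + 3) ≤ 2 * ((n : ℝ) + 1) := by
        have h2a : (0:ℝ) < 2 * a + 1 := by linarith
        rw [← mul_le_mul_iff_of_pos_right h2a]
        linarith [h3, key]
      rw [Int.lt_iff_add_one_le]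
      rw [le_M_iff θ hθ (n + 1) hrn1 (m + 1) (by omega)]
      have hK2 := K2 (a + 1) (by linarith)
      have hcast : ((m + 1 : ℤ) : ℝ) = a + 1 := by push_cast; rw [hadef]
      rw [hcast]
      push_cast
      calc Real.log θ ≤ ((n : ℝ) + 1) * (2 / (2 * (a + 1) + 1)) := by
            rw [mul_div_assoc']
            rw [le_div_iff₀ (by linarith)]
            linarith [h4]
        _ ≤ ((n : ℝ) + 1) * Real.log (1 + (a + 1)⁻¹) := by
            apply mul_le_mul_of_nonneg_left hK2
            linarith
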